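/- Every word in the constructed language 𝓛_w is derivable from w: if u ∈ 𝓛_w then u can be obtained from w by a finite sequence of the reductions LL ↦ L, RR ↦ R, LR ↦ empty, RL ↦ empty (on adjacent letters) together with tail formation (passing to a suffix). -/

import Mathlib

/-- The alphabet of orbit pattern tags: `L` for a leftward move, `R` for a rightward move. -/
inductive Letter : Type
  | L : Letter
  | R : Letter
deriving DecidableEq

open Letter

/-- A continuous interval map `f` admits the orbit pattern tag `w` if there is an
eventually fixed orbit `x 0, x 1, ..., x w.length` of `f` (the last point being fixed,
all earlier points different from it) whose `j`-th move is labelled by the `j`-th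
letter of `w`: `L` if the orbit moves left, `R` if it moves right. -/
def Admits (f : ℝ → ℝ) (w : List Letter) : Prop :=
  ∃ x : ℕ → ℝ,
    (∀ j < w.length, f (x j) = x (j + 1)) ∧
    f (x w.length) = x w.length ∧
    (∀ j < w.length, x j ≠ x w.length) ∧
    (∀ j : Fin w.length,
      (w.get j = L ∧ x ((j : ℕ) + 1) < x (j : ℕ)) ∨
      (w.get j = R ∧ x (j : ℕ) < x ((j : ℕ) + 1)))

/-- One step of reduction on words: replace an adjacent `LL` by `L`, an adjacent `RR`
by `R`, or delete an adjacent `LR` or `RL`. -/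
inductive Red : List Letter → List Letter → Prop
  | ll (v v' : List Letter) : Red (v ++ [L, L] ++ v') (v ++ [L] ++ v')
  | rr (v v' : List Letter) : Red (v ++ [R, R] ++ v') (v ++ [R] ++ v')
  | lr (v v' : List Letter) : Red (v ++ [L, R] ++ v') (v ++ v')
  | rl (v v' : List Letter) : Red (v ++ [R, L] ++ v') (v ++ v')

/-- One derivation step: a reduction, or tail formation (passing to a suffix). -/
inductive Step : List Letter → List Letter → Prop
  | red {w u : List Letter} : Red w u → Step w u
  | tail {w u : List Letter} : u <:+ w → Step w u

/-- `u` is obtained from `w` by finitely many reductions. -/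
def Reducible : List Letter → List Letter → Prop := Relation.ReflTransGen Red

/-- `u` is derivable from `w`: finitely many reductions and tail formations, in any order. -/
def Derivable : List Letter → List Letter → Prop := Relation.ReflTransGen Step

/-- The constructed language `𝓛 w`.  For `|w| ≤ 2` it consists of all suffixes of `w`;
for longer words it is defined by the recursion of Definition 1.3:
`𝓛 (a·a·a·w') = 𝓛 (a·a·w') ∪ a·(𝓛 (a·a·w'))ᵃ`,
`𝓛 (a·a·b·w') = 𝓛 (a·b·w') ∪ a·𝓛 (a·b·w')` (`a ≠ b`), and
`𝓛 (a·b·w') = 𝓛 (b·w') ∪ a·(𝓛 (b·w'))ᵇ` (`a ≠ b`),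
where the superscript restricts to words starting with the given letter. -/
def Lang : List Letter → Set (List Letter)
  | [] => { [] }
  | [a] => { [], [a] }
  | [a, b] => { [], [b], [a, b] }
  | (a :: b :: c :: rest) =>
      let T := Lang (b :: c :: rest)
      if a = b then
        if b = c then T ∪ (fun u => a :: u) '' {u ∈ T | u.head? = some a}
        else T ∪ (fun u => a :: u) '' T
      else T ∪ (fun u => a :: u) '' {u ∈ T | u.head? = some b}

lemma red_aa (a : Letter) (v v' : List Letter) :
    Red (v ++ a :: a :: v') (v ++ a :: v') := by
  cases a
  · simpa using Red.ll v v'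
  · simpa using Red.rr v v'

lemma red_ab {a b : Letter} (h : a ≠ b) (v v' : List Letter) :
    Red (v ++ a :: b :: v') (v ++ v') := by
  cases a <;> cases b
  · exact absurd rfl h
  · simpa using Red.lr v v'
  · simpa using Red.rl v v'
  · exact absurd rfl h

lemma red_cons (a : Letter) {s s' : List Letter} (h : Red s s') : Red (a :: s) (a :: s') := by
  cases h with
  | ll v v' => simpa using Red.ll (a :: v) v'
  | rr v v' => simpa using Red.rr (a :: v) v'
  | lr v v' => simpa using Red.lr (a :: v) v'
  | rl v v' => simpa using Red.rl (a :: v) v'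

lemma reducible_cons (a : Letter) {s s' : List Letter} (h : Reducible s s') :
    Reducible (a :: s) (a :: s') :=
  Relation.ReflTransGen.lift (fun l => a :: l) (fun _ _ hr => red_cons a hr) _ _ h

lemma letter_eq {a b d : Letter} (hab : a ≠ b) (hda : d ≠ a) : d = b := by
  cases a <;> cases b <;> cases d <;> simp_all

lemma red_to_single (a : Letter) : ∀ n (s : List Letter), s.length = n →
    Reducible (a :: a :: s) [a] := by
  intro n
  induction n using Nat.strong_induction_on with
  | _ n IH =>
    intro s hs
    match s with
    | [] =>
      exact Relation.ReflTransGen.single (by simpa using red_aa a [] [])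
    | [d] =>
      by_cases hda : d = a
      · subst hda
        refine Relation.ReflTransGen.head (b := [d, d]) ?_ ?_
        · simpa using red_aa d [d] []
        · exact Relation.ReflTransGen.single (by simpa using red_aa d [] [])
      · exact Relation.ReflTransGen.single
          (by simpa using red_ab (fun h => hda h.symm) [a] [])
    | d :: e :: s' =>
      simp only [List.length_cons] at hs
      by_cases hde : d = e
      · subst hde
        refine Relation.ReflTransGen.head (b := a :: a :: d :: s') ?_ ?_
        · simpa using red_aa d [a, a] s'
        · exact IH (s'.length + 1) (by omega) (d :: s') (by simp)
      · refine Relation.ReflTransGen.head (b := a :: a :: s') ?_ ?_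
        · simpa using red_ab hde [a, a] s'
        · exact IH s'.length (by omega) s' rfl

lemma lang_cons3 (a b c : Letter) (rest : List Letter) :
    Lang (a :: b :: c :: rest) =
      if a = b then
        if b = c then Lang (b :: c :: rest) ∪
          (fun u => a :: u) '' {u ∈ Lang (b :: c :: rest) | u.head? = some a}
        else Lang (b :: c :: rest) ∪ (fun u => a :: u) '' Lang (b :: c :: rest)
      else Lang (b :: c :: rest) ∪
        (fun u => a :: u) '' {u ∈ Lang (b :: c :: rest) | u.head? = some b} := rfl

lemma mem_lang_tail {b : Letter} {s u : List Letter}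
    (hu : u ∈ Lang (b :: s)) (h : u.head? ≠ some b) : u ∈ Lang s := by
  match s with
  | [] =>
    simp only [Lang] at hu ⊢
    rcases hu with rfl | rfl
    · rfl
    · simp at h
  | [e] =>
    simp only [Lang] at hu ⊢
    rcases hu with rfl | rfl | rfl
    · simp
    · simp
    · simp at h
  | c :: d :: r =>
    rw [lang_cons3] at hu
    split_ifs at hu <;>
    · rcases hu with hu | ⟨x, _, rfl⟩
      · exact hu
      · simp at h

lemma lang_suffix : ∀ n (t u : List Letter), t.length = n → u ∈ Lang t → u ≠ [] →
    ∃ s, s <:+ t ∧ u ∈ Lang s ∧ s.head? = u.head? := by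
  intro n
  induction n using Nat.strong_induction_on with
  | _ n IH =>
    intro t u hlen hu hne
    match t with
    | [] =>
      simp only [Lang] at hu; exact absurd hu hne
    | [a] =>
      simp only [Lang] at hu
      rcases hu with rfl | rfl
      · exact absurd rfl hne
      · exact ⟨[a], List.suffix_refl _, by simp [Lang]⟩
    | [a, b] =>
      simp only [Lang] at hu
      rcases hu with rfl | rfl | rfl
      · exact absurd rfl hne
      · exact ⟨[b], ⟨[a], rfl⟩, by simp [Lang], rfl⟩
      · exact ⟨[a, b], List.suffix_refl _, by simp [Lang], rfl⟩
    | a :: b :: c :: rest =>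
      simp only [List.length_cons] at hlen
      have hu0 := hu
      rw [lang_cons3] at hu
      have hT : ∀ hu' : u ∈ Lang (b :: c :: rest),
          ∃ s, s <:+ a :: b :: c :: rest ∧ u ∈ Lang s ∧ s.head? = u.head? := by
        intro hu'
        obtain ⟨s, hs1, hs2, hs3⟩ :=
          IH (rest.length + 2) (by omega) (b :: c :: rest) u (by simp) hu' hne
        exact ⟨s, hs1.trans (List.suffix_cons a _), hs2, hs3⟩
      split_ifs at hu with h1 h2
      · rcases hu with hu | ⟨x, hx, rfl⟩
        · exact hT hu
        · exact ⟨a :: b :: c :: rest, List.suffix_refl _, hu0, rfl⟩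
      · rcases hu with hu | ⟨x, hx, rfl⟩
        · exact hT hu
        · exact ⟨a :: b :: c :: rest, List.suffix_refl _, hu0, rfl⟩
      · rcases hu with hu | ⟨x, hx, rfl⟩
        · exact hT hu
        · exact ⟨a :: b :: c :: rest, List.suffix_refl _, hu0, rfl⟩

lemma main_red : ∀ n (t u : List Letter), t.length = n → u ∈ Lang t → u ≠ [] →
    u.head? = t.head? → Reducible t u := by
  intro n
  induction n using Nat.strong_induction_on with
  | _ n IH =>
    intro t u hlen hu hne hhd
    match t with
    | [] => simp only [Lang] at hu; exact absurd hu hne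
    | [a] =>
      simp only [Lang] at hu
      rcases hu with rfl | rfl
      · exact absurd rfl hne
      · exact Relation.ReflTransGen.refl
    | [a, b] =>
      simp only [Lang] at hu
      rcases hu with rfl | rfl | rfl
      · exact absurd rfl hne
      · simp at hhd
        obtain rfl : b = a := hhd
        exact Relation.ReflTransGen.single (by simpa using red_aa b [] [])
      · exact Relation.ReflTransGen.refl
    | a :: b :: c :: rest =>
      subst hlen
      simp only [List.length_cons] at IH
      replace hhd : u.head? = some a := hhd
      rw [lang_cons3] at hu
      split_ifs at hu with h1 h2
      · -- a = b = c
        obtain rfl := h1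
        obtain rfl := h2
        rcases hu with hu | ⟨x, ⟨hx, hxh⟩, rfl⟩
        · have : Reducible (a :: a :: rest) u :=
            IH (rest.length + 2) (by omega) _ u (by simp) hu hne hhd
          exact Relation.ReflTransGen.head (by simpa using red_aa a [] (a :: rest)) this
        · have hx0 : x ≠ [] := by rintro rfl; simp at hxh
          have : Reducible (a :: a :: rest) x :=
            IH (rest.length + 2) (by omega) _ x (by simp) hx hx0 hxh
          exact reducible_cons a this
      · -- a = b ≠ c
        obtain rfl := h1
        rcases hu with hu | ⟨x, hx, rfl⟩
        · have : Reducible (a :: c :: rest) u :=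
            IH (rest.length + 2) (by omega) _ u (by simp) hu hne hhd
          exact Relation.ReflTransGen.head (by simpa using red_aa a [] (c :: rest)) this
        · match x, hx with
          | [], _ => exact red_to_single a _ (c :: rest) rfl
          | e :: x', hx =>
            by_cases hea : e = a
            · subst hea
              have : Reducible (e :: c :: rest) (e :: x') :=
                IH (rest.length + 2) (by omega) _ _ (by simp) hx (by simp) rfl
              exact reducible_cons e this
            · have hec : e = c := letter_eq h2 hea
              subst hec
              have hx2 : (e :: x') ∈ Lang (e :: rest) :=
                mem_lang_tail hx (by simp; exact fun h => hea h)
              have : Reducible (e :: rest) (e :: x') :=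
                IH (rest.length + 1) (by omega) _ _ (by simp) hx2 (by simp) rfl
              refine Relation.ReflTransGen.head (b := a :: e :: rest) ?_ (reducible_cons a this)
              simpa using red_aa a [] (e :: rest)
      · -- a ≠ b
        have key : ∀ m (v : List Letter), v.length = m → v.length + 2 ≤ rest.length + 3 →
            ∀ u, u ∈ Lang (b :: v) → u.head? = some a → Reducible (a :: b :: v) u := by
          intro m
          induction m using Nat.strong_induction_on with
          | _ m IHm =>
            intro v hv hvlen u hu hud
            have hune : u ≠ [] := by rintro rfl; simp at hud
            have hu2 : u ∈ Lang v := mem_lang_tail hu (by rw [hud]; simp; exact h1)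
            match v, hv with
            | [], _ => simp only [Lang] at hu2; exact absurd hu2 hune
            | d :: v', hv =>
              simp only [List.length_cons] at hv hvlen
              by_cases hda : d = a
              · subst hda
                have : Reducible (d :: v') u :=
                  IH (v'.length + 1) (by omega) _ u (by simp) hu2 hune hud
                refine Relation.ReflTransGen.head (b := d :: v') ?_ this
                simpa using red_ab (fun h => h1 h.symm) [d] v'
              · have hdb : d = b := letter_eq h1 hda
                subst hdb
                have : Reducible (a :: d :: v') u :=
                  IHm v'.length (by omega) v' rfl (by omega) u hu2 hud
                refine Relation.ReflTransGen.head (b := a :: d :: v') ?_ this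
                simpa using red_aa d [a] v'
        rcases hu with hu | ⟨x, ⟨hx, hxh⟩, rfl⟩
        · exact key (rest.length + 1) (c :: rest) rfl (by simp only [List.length_cons]; omega) u hu hhd
        · have hx0 : x ≠ [] := by rintro rfl; simp at hxh
          have : Reducible (b :: c :: rest) x :=
            IH (rest.length + 2) (by omega) _ x (by simp) hx hx0 hxh
          exact reducible_cons a this

/-- every word in the constructed language is derivable from w. -/
theorem stmt15 (w u : List Letter) (h : u ∈ Lang w) : Derivable w u := by
  by_cases hne : u = []
  · subst hne
    exact Relation.ReflTransGen.single (Step.tail List.nil_suffix)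
  · obtain ⟨s, hs1, hs2, hs3⟩ := lang_suffix w.length w u rfl h hne
    have hr : Reducible s u := main_red s.length s u rfl hs2 hne hs3.symm
    exact Relation.ReflTransGen.head (Step.tail hs1)
      (Relation.ReflTransGen.mono (fun _ _ hh => Step.red hh) _ _ hr)
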